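/- Let G be a finite group and let S ⊆ ℂG be a subspace closed under both right multiplication by elements of G and under the Hadamard (pointwise) product, containing Σ_{g∈G} g. If e = Σ_{g∈X} g (for X ⊆ G with 1_G ∈ X) is a primitive idempotent of S with respect to the Hadamard product, then X is a subgroup of G. -/

import Mathlib

/-- The Hadamard (coefficientwise) product on the complex group algebra. -/
noncomputable def hadamard {G : Type*} (a b : MonoidAlgebra ℂ G) : MonoidAlgebra ℂ G :=
  MonoidAlgebra.ofCoeff (Finsupp.zipWith (· * ·) (mul_zero 0) a.coeff b.coeff)

/-- The element `1∘ = Σ_{g ∈ G} g` of the group algebra. -/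
noncomputable def hadamardOne (G : Type*) [Fintype G] : MonoidAlgebra ℂ G :=
  ∑ g : G, MonoidAlgebra.single g (1 : ℂ)

noncomputable def ind {G : Type*} (T : Finset G) : MonoidAlgebra ℂ G :=
  ∑ g ∈ T, MonoidAlgebra.single g (1 : ℂ)

lemma ind_apply {G : Type*} [DecidableEq G] (T : Finset G) (h : G) :
    (ind T).coeff h = if h ∈ T then 1 else 0 := by
  classical
  rw [ind]
  rw [MonoidAlgebra.coeff_sum, Finset.sum_apply']
  simp [Finsupp.single_apply, MonoidAlgebra.coeff_single]

lemma hadamard_ind {G : Type*} [DecidableEq G] (A B : Finset G) :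
    hadamard (ind A) (ind B) = ind (A ∩ B) := by
  classical
  ext h
  simp only [hadamard, MonoidAlgebra.coeff_ofCoeff, Finsupp.zipWith_apply, ind_apply, Finset.mem_inter]
  split_ifs <;> simp_all

lemma ind_ne_zero {G : Type*} {A : Finset G} (hA : A.Nonempty) : ind A ≠ 0 := by
  classical
  obtain ⟨a, ha⟩ := hA
  intro h
  have := congrArg (fun f => f.coeff a) h
  simp [ind_apply, ha] at this

theorem primitiveIdempotent_support_subgroup
    (G : Type*) [Group G] [Fintype G] (S : Submodule ℂ (MonoidAlgebra ℂ G))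
    (hRight : ∀ x ∈ S, ∀ g : G, x * MonoidAlgebra.single g (1 : ℂ) ∈ S)
    (hHad : ∀ x ∈ S, ∀ y ∈ S, hadamard x y ∈ S)
    (hOne : hadamardOne G ∈ S)
    (X : Finset G) (hX1 : (1 : G) ∈ X)
    (e : MonoidAlgebra ℂ G) (he : e = ∑ g ∈ X, MonoidAlgebra.single g (1 : ℂ))
    (heS : e ∈ S) (hIdem : hadamard e e = e) (hne : e ≠ 0)
    (hPrim : ¬ ∃ a b : MonoidAlgebra ℂ G, a ∈ S ∧ b ∈ S ∧ a ≠ 0 ∧ b ≠ 0 ∧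
      hadamard a a = a ∧ hadamard b b = b ∧ hadamard a b = 0 ∧ e = a + b) :
    ∃ H : Subgroup G, (X : Set G) = (H : Set G) := by
  classical
  have heind : e = ind X := he
  have key : ∀ g ∈ X, X.image (· * g) = X := by
    intro g hg
    set T := X.image (· * g) with hT
    have hTe : e * MonoidAlgebra.single g 1 = ind T := by
      rw [heind, ind, ind, hT,
        Finset.sum_image (by intro a _ b _ hab; exact mul_right_cancel hab),
        Finset.sum_mul]
      simp [MonoidAlgebra.single_mul_single]
    have hfS : ind (X ∩ T) ∈ S := by
      rw [← hadamard_ind, ← hTe, ← heind]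
      exact hHad e heS _ (hRight e heS g)
    have hdisj : Disjoint (X ∩ T) (X \ T) :=
      Finset.disjoint_sdiff.mono_left Finset.inter_subset_right
    have hunion : (X ∩ T) ∪ (X \ T) = X := sup_inf_sdiff X T
    have hsum : e = ind (X ∩ T) + ind (X \ T) := by
      rw [heind, ind, ind, ind, ← Finset.sum_union hdisj, hunion]
    have hbS : ind (X \ T) ∈ S := by
      have : ind (X \ T) = e - ind (X ∩ T) := by rw [hsum, add_sub_cancel_left]
      rw [this]; exact Submodule.sub_mem S heS hfS
    have hcase : (X ∩ T) = ∅ ∨ (X \ T) = ∅ := by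
      by_contra hc
      push_neg at hc
      refine hPrim ⟨ind (X ∩ T), ind (X \ T), hfS, hbS,
        ind_ne_zero hc.1,
        ind_ne_zero hc.2, ?_, ?_, ?_, hsum⟩
      · rw [hadamard_ind, Finset.inter_self]
      · rw [hadamard_ind, Finset.inter_self]
      · rw [hadamard_ind]
        have : (X ∩ T) ∩ (X \ T) = ∅ := Finset.disjoint_iff_inter_eq_empty.1 hdisj
        rw [this]
        simp [ind]
    have hgT : g ∈ T := Finset.mem_image.2 ⟨1, hX1, one_mul g⟩
    have hgXT : g ∈ X ∩ T := Finset.mem_inter.2 ⟨hg, hgT⟩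
    rcases hcase with h | h
    · rw [h] at hgXT; simp at hgXT
    · have hsub : X ⊆ T := by
        intro x hx
        by_contra hxT
        have : x ∈ X \ T := Finset.mem_sdiff.2 ⟨hx, hxT⟩
        rw [h] at this; simp at this
      exact (Finset.eq_of_subset_of_card_le hsub
        (by rw [hT]; exact Finset.card_image_le)).symm
  refine ⟨{ carrier := X
            mul_mem' := ?_
            one_mem' := hX1
            inv_mem' := ?_ }, rfl⟩
  · intro a b ha hb
    rw [← key b hb]
    exact Finset.mem_image.2 ⟨a, ha, rfl⟩
  · intro g hg
    have h1 : (1 : G) ∈ X.image (· * g) := by rw [key g hg]; exact hX1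
    obtain ⟨x, hx, hxg⟩ := Finset.mem_image.1 h1
    have : x = g⁻¹ := eq_inv_of_mul_eq_one_left hxg
    rwa [← this]
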